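/- Let (Sₙ)ₙ be a sequence of real random variables converging in distribution to a standard normal random variable, and let ε > 0. Set δ = ε√(2π)/9. Then there exists n₀ such that for all n ≥ n₀ and every τ ∈ ℝ, P(Sₙ ≥ τ + δ) + P(Sₙ ≤ τ − δ) ≥ 1 − 2ε/3. -/

import Mathlib

open MeasureTheory ProbabilityTheory Filter Real

/-- Standard normal CDF. -/
noncomputable def gcdf (x : ℝ) : ℝ := (gaussianReal 0 1 (Set.Iic x)).toReal

lemma gcdf_eq (x : ℝ) : gcdf x = cdf (gaussianReal 0 1) x := (cdf_eq_real _ x).symm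

lemma gcdf_tendsto_atTop : Tendsto gcdf atTop (nhds 1) := by
  simp only [funext gcdf_eq]; exact tendsto_cdf_atTop _

lemma gcdf_tendsto_atBot : Tendsto gcdf atBot (nhds 0) := by
  simp only [funext gcdf_eq]; exact tendsto_cdf_atBot _

lemma gcdf_mono : Monotone gcdf := by
  intro a b hab; rw [gcdf_eq, gcdf_eq]; exact monotone_cdf _ hab

lemma gaussianPDFReal_le (x : ℝ) :
    gaussianPDFReal 0 1 x ≤ (Real.sqrt (2 * Real.pi))⁻¹ := by
  rw [gaussianPDFReal]
  simp only [NNReal.coe_one, mul_one]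
  calc (Real.sqrt (2 * Real.pi))⁻¹ * rexp (- (x - 0)^2 / 2)
      ≤ (Real.sqrt (2 * Real.pi))⁻¹ * 1 := by
        gcongr
        exact Real.exp_le_one_iff.mpr (by nlinarith [sq_nonneg (x - 0)])
    _ = _ := mul_one _

lemma gcdf_lip {a b : ℝ} (hab : a ≤ b) :
    gcdf b - gcdf a ≤ (b - a) / Real.sqrt (2 * Real.pi) := by
  have h2π : 0 < Real.sqrt (2 * Real.pi) := Real.sqrt_pos.mpr (by positivity)
  have hiic : Set.Iic b = Set.Iic a ∪ Set.Ioc a b := (Set.Iic_union_Ioc_eq_Iic hab).symm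
  have hdisj : Disjoint (Set.Iic a) (Set.Ioc a b) := Set.Iic_disjoint_Ioc le_rfl
  have hadd : gaussianReal 0 1 (Set.Iic b)
      = gaussianReal 0 1 (Set.Iic a) + gaussianReal 0 1 (Set.Ioc a b) := by
    rw [hiic, measure_union hdisj measurableSet_Ioc]
  have hfin : ∀ s : Set ℝ, gaussianReal 0 1 s ≠ ⊤ := fun s => measure_ne_top _ s
  have : gcdf b - gcdf a = (gaussianReal 0 1 (Set.Ioc a b)).toReal := by
    rw [gcdf, gcdf, hadd, ENNReal.toReal_add (hfin _) (hfin _)]; ring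
  rw [this, gaussianReal_apply_eq_integral 0 one_ne_zero,
    ENNReal.toReal_ofReal (integral_nonneg (fun x => gaussianPDFReal_nonneg _ _ _))]
  have hint : ∫ x in Set.Ioc a b, gaussianPDFReal 0 1 x
      ≤ ∫ _x in Set.Ioc a b, (Real.sqrt (2 * Real.pi))⁻¹ := by
    refine setIntegral_mono_on ((integrable_gaussianPDFReal _ _).restrict)
      (integrableOn_const ?_) measurableSet_Ioc
      (fun x _ => gaussianPDFReal_le x)
    simp [Real.volume_Ioc]
  refine hint.trans ?_
  rw [setIntegral_const, Real.volume_real_Ioc_of_le hab, smul_eq_mul]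
  rw [div_eq_mul_inv]

theorem stmt_1
    (Ω : ℕ → Type) [∀ n, MeasurableSpace (Ω n)]
    (P : ∀ n, Measure (Ω n)) [∀ n, IsProbabilityMeasure (P n)]
    (S : ∀ n, Ω n → ℝ)
    (hS : ∀ x : ℝ, Tendsto (fun n => (P n {ω | S n ω ≤ x}).toReal) atTop
      (nhds ((gaussianReal 0 1 (Set.Iic x)).toReal)))
    (ε : ℝ) (hε : 0 < ε) :
    ∃ n₀ : ℕ, ∀ n ≥ n₀, ∀ τ : ℝ,
      (P n {ω | S n ω ≥ τ + ε * Real.sqrt (2 * Real.pi) / 9}).toReal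
        + (P n {ω | S n ω ≤ τ - ε * Real.sqrt (2 * Real.pi) / 9}).toReal
        ≥ 1 - 2 * ε / 3 := by
  have h2π : 0 < Real.sqrt (2 * Real.pi) := Real.sqrt_pos.mpr (by positivity)
  set δ : ℝ := ε * Real.sqrt (2 * Real.pi) / 9 with hδdef
  have hδ : 0 < δ := by positivity
  -- tails of the normal distribution
  obtain ⟨M₁, hM₁⟩ := eventually_atTop.mp
    (gcdf_tendsto_atTop.eventually (eventually_ge_nhds (show 1 - ε/3 < 1 by linarith)))
  obtain ⟨M₂, hM₂⟩ := eventually_atBot.mp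
    (gcdf_tendsto_atBot.eventually (eventually_le_nhds (show (0:ℝ) < ε/3 by linarith)))
  set M : ℝ := max M₁ (max (-M₂) 0) with hMdef
  have hM0 : 0 ≤ M := le_max_of_le_right (le_max_right _ _)
  have hΦM : 1 - ε/3 ≤ gcdf M := hM₁ M (le_max_left _ _)
  have hΦmM : gcdf (-M) ≤ ε/3 := by
    refine hM₂ (-M) ?_
    have : -M₂ ≤ M := le_max_of_le_right (le_max_left _ _)
    linarith
  -- the grid
  set u : ℝ := δ / 2 with hudef
  have hu : 0 < u := by positivity
  set g : ℕ → ℝ := fun k => (-M - 2*δ) + k * u with hgdef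
  set N : ℕ := ⌈(2*M + 4*δ) / u⌉₊ with hNdef
  -- the distribution functions
  set F : ℕ → ℝ → ℝ := fun n x => (P n {ω | S n ω ≤ x}).toReal with hFdef
  have hFmono : ∀ (n : ℕ) {x y : ℝ}, x ≤ y → F n x ≤ F n y := by
    intro n x y hxy
    exact ENNReal.toReal_mono (measure_ne_top _ _)
      (measure_mono (fun ω h => le_trans h hxy))
  have hFnonneg : ∀ (n : ℕ) (x : ℝ), 0 ≤ F n x := fun n x => ENNReal.toReal_nonneg
  have hge : ∀ (n : ℕ) (a : ℝ), 1 - F n a ≤ (P n {ω | S n ω ≥ a}).toReal := by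
    intro n a
    have hcover : (Set.univ : Set (Ω n)) ⊆ {ω | S n ω ≥ a} ∪ {ω | S n ω ≤ a} := by
      intro ω _
      rcases le_total a (S n ω) with h | h
      · exact Or.inl h
      · exact Or.inr h
    have h1 : P n Set.univ ≤ P n {ω | S n ω ≥ a} + P n {ω | S n ω ≤ a} :=
      le_trans (measure_mono hcover) (measure_union_le _ _)
    have h2 := ENNReal.toReal_mono
      (ENNReal.add_ne_top.mpr ⟨measure_ne_top _ _, measure_ne_top _ _⟩) h1
    rw [measure_univ, ENNReal.toReal_one,
      ENNReal.toReal_add (measure_ne_top _ _) (measure_ne_top _ _)] at h2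
    simp only [hFdef]
    linarith
  -- eventual closeness of F to gcdf
  have hconv : ∀ x : ℝ, ∀ᶠ n in atTop, |F n x - gcdf x| ≤ ε/6 := by
    intro x
    have := (hS x).eventually (Metric.closedBall_mem_nhds (gcdf x) (show (0:ℝ) < ε/6 by linarith))
    filter_upwards [this] with n hn
    simpa [Metric.mem_closedBall, Real.dist_eq] using hn
  have hev : ∀ᶠ n in atTop,
      (∀ k ∈ Finset.range (N+1), |F n (g k) - gcdf (g k)| ≤ ε/6)
      ∧ |F n M - gcdf M| ≤ ε/6 ∧ |F n (-M) - gcdf (-M)| ≤ ε/6 :=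
    (((Finset.range (N+1)).eventually_all).mpr (fun k _ => hconv (g k))).and
      ((hconv M).and (hconv (-M)))
  obtain ⟨n₀, hn₀⟩ := eventually_atTop.mp hev
  refine ⟨n₀, fun n hn τ => ?_⟩
  obtain ⟨hgrid, hFM, hFmM⟩ := hn₀ n hn
  show (P n {ω | S n ω ≥ τ + δ}).toReal + F n (τ - δ) ≥ 1 - 2*ε/3
  rcases le_or_gt (M + δ) τ with hA | hA
  · -- right tail: τ - δ ≥ M
    have h1 : F n M ≤ F n (τ - δ) := hFmono n (by linarith)
    have h2 := abs_le.mp hFM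
    have h3 : 0 ≤ (P n {ω | S n ω ≥ τ + δ}).toReal := ENNReal.toReal_nonneg
    linarith
  rcases le_or_gt τ (-(M + δ)) with hB | hB
  · -- left tail: τ + δ ≤ -M
    have h1 : F n (τ + δ) ≤ F n (-M) := hFmono n (by linarith)
    have h2 := abs_le.mp hFmM
    have h3 := hge n (τ + δ)
    have h4 : 0 ≤ F n (τ - δ) := hFnonneg n _
    linarith
  -- middle: -(M+δ) < τ < M+δ
  set klo : ℕ := ⌊(τ + M + δ) / u⌋₊ with hklodef
  set khi : ℕ := ⌈(τ + M + 3*δ) / u⌉₊ with hkhidef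
  have hτl : -(M + δ) < τ := hB
  have hτr : τ < M + δ := hA
  have hpos1 : 0 ≤ (τ + M + δ) / u := div_nonneg (by linarith) hu.le
  have hpos2 : 0 ≤ (τ + M + 3*δ) / u := div_nonneg (by linarith) hu.le
  have hklo1 : (klo : ℝ) * u ≤ τ + M + δ := by
    have := Nat.floor_le hpos1
    rw [hklodef]
    calc ((⌊(τ + M + δ) / u⌋₊ : ℝ)) * u ≤ ((τ + M + δ) / u) * u := by gcongr
      _ = τ + M + δ := div_mul_cancel₀ _ hu.ne'
  have hklo2 : τ + M + δ - u < (klo : ℝ) * u := by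
    have h := Nat.lt_floor_add_one ((τ + M + δ) / u)
    have h2 : (τ + M + δ) / u * u < ((klo : ℝ) + 1) * u := by
      rw [hklodef]; exact mul_lt_mul_of_pos_right h hu
    rw [div_mul_cancel₀ _ hu.ne'] at h2
    nlinarith
  have hkhi1 : τ + M + 3*δ ≤ (khi : ℝ) * u := by
    have h := Nat.le_ceil ((τ + M + 3*δ) / u)
    have h2 : (τ + M + 3*δ) / u * u ≤ (khi : ℝ) * u := by
      rw [hkhidef]; exact mul_le_mul_of_nonneg_right h hu.le
    rwa [div_mul_cancel₀ _ hu.ne'] at h2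
  have hkhi2 : (khi : ℝ) * u < τ + M + 3*δ + u := by
    have h := Nat.ceil_lt_add_one hpos2
    have h2 : (khi : ℝ) * u < ((τ + M + 3*δ) / u + 1) * u := by
      rw [hkhidef]; exact mul_lt_mul_of_pos_right h hu
    rw [add_mul, div_mul_cancel₀ _ hu.ne', one_mul] at h2
    linarith
  -- grid point bounds
  have hglo1 : g klo ≤ τ - δ := by simp only [hgdef]; linarith
  have hglo2 : τ - δ - u ≤ g klo := by simp only [hgdef]; linarith
  have hghi1 : τ + δ ≤ g khi := by simp only [hgdef]; linarith
  have hghi2 : g khi ≤ τ + δ + u := by simp only [hgdef]; linarith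
  -- membership in the grid
  have hkloN : klo ∈ Finset.range (N+1) := by
    refine Finset.mem_range.mpr (Nat.lt_succ_of_le ?_)
    calc klo ≤ ⌈(τ + M + δ) / u⌉₊ := Nat.floor_le_ceil _
      _ ≤ N := by
        rw [hNdef]
        exact Nat.ceil_le_ceil ((div_le_div_iff_of_pos_right hu).mpr (by linarith))
  have hkhiN : khi ∈ Finset.range (N+1) := by
    refine Finset.mem_range.mpr (Nat.lt_succ_of_le ?_)
    rw [hkhidef, hNdef]
    exact Nat.ceil_le_ceil ((div_le_div_iff_of_pos_right hu).mpr (by linarith))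
  have hlo := abs_le.mp (hgrid klo hkloN)
  have hhi := abs_le.mp (hgrid khi hkhiN)
  -- Lipschitz bound on the gaussian CDF increment
  have hlip := gcdf_lip (show g klo ≤ g khi by linarith)
  have hdiff : (g khi - g klo) / Real.sqrt (2 * Real.pi)
      ≤ 3 * δ / Real.sqrt (2 * Real.pi) := (div_le_div_iff_of_pos_right h2π).mpr (by linarith)
  have hval : 3 * δ / Real.sqrt (2 * Real.pi) = ε / 3 := by
    rw [hδdef]; field_simp; ring
  -- monotonicity comparisons
  have hm1 : F n (τ + δ) ≤ F n (g khi) := hFmono n hghi1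
  have hm2 : F n (g klo) ≤ F n (τ - δ) := hFmono n hglo1
  have hg1 := hge n (τ + δ)
  linarith
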